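/- arXiv:2302.05882 — 2 statements merged into one kernel-verified Lean document; each statement's English description precedes it below -/
import Mathlib

section
/- Let σ(x) = x², p ≥ 2, and let Ω̃ be the random overlap matrix with Q̃ = M P⁻¹ Mᵀ + D_{√q} Ξ D_{√q}, where Ξ has unit diagonal and independent off-diagonal entries distributed as ⟨g, g'⟩ for independent uniform g, g' on S^{d−k−1}. Then E_Ξ[R(Ω̃)] = R(Ω̄) + (1/p²) · (Σ_{i≠j} q_i q_j)/(d−k), where Ω̄ is obtained by replacing Ξ with the identity matrix and R(Ω) = (Tr(P)² + 2Tr(P²))/(2k²) − (Tr(P)Tr(Q) + 2Tr(MMᵀ))/(pk) + (Tr(Q)² + 2Tr(Q²))/(2p²) + Δ/2. -/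
open MeasureTheory ProbabilityTheory Matrix

/-- For the square activation, with the random overlap matrix
`Q̃ = M P⁻¹ Mᵀ + D_{√q} Ξ D_{√q}`, where `Ξ` has unit diagonal and off-diagonal entries with
mean `0` and second moment `1/(d−k)` (the moments of `⟨g, g'⟩` for independent uniform vectors
on `S^{d−k−1}`), the averaged risk satisfies
`E_Ξ[R(Q̃)] = R(Q̄) + (1/p²)(Σ_{i≠j} q_i q_j)/(d−k)`, where `Q̄` replaces `Ξ` by the identity
and `R(Q) = (Tr(P)²+2Tr(P²))/(2k²) − (Tr(P)Tr(Q)+2Tr(MMᵀ))/(pk) + (Tr(Q)²+2Tr(Q²))/(2p²) + Δ/2`. -/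
theorem mean_field_risk_correction
    {p k d : ℕ} (hp : 2 ≤ p) (hk : 0 < k) (hdk : k + 2 ≤ d)
    (q : Fin p → ℝ) (hq : ∀ i, 0 ≤ q i)
    (M : Matrix (Fin p) (Fin k) ℝ) (P : Matrix (Fin k) (Fin k) ℝ) (hP : IsUnit P.det)
    (Δ : ℝ)
    {Ω : Type*} [MeasurableSpace Ω] (Pr : Measure Ω) [IsProbabilityMeasure Pr]
    (Ξ : Ω → Matrix (Fin p) (Fin p) ℝ)
    (hmeas : ∀ i j, Measurable fun ω => Ξ ω i j)
    (hbdd : ∀ ω i j, |Ξ ω i j| ≤ 1)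
    (hdiag : ∀ ω i, Ξ ω i i = 1)
    (hsymm : ∀ ω i j, Ξ ω i j = Ξ ω j i)
    (hmean : ∀ i j, i ≠ j → (∫ ω, Ξ ω i j ∂Pr) = 0)
    (hvar : ∀ i j, i ≠ j → (∫ ω, (Ξ ω i j) ^ 2 ∂Pr) = 1 / ((d : ℝ) - k))
    (R : Matrix (Fin p) (Fin p) ℝ → ℝ)
    (hR : ∀ Qm : Matrix (Fin p) (Fin p) ℝ,
      R Qm = (P.trace ^ 2 + 2 * (P * P).trace) / (2 * (k : ℝ) ^ 2)
        - (P.trace * Qm.trace + 2 * (M * Mᵀ).trace) / ((p : ℝ) * k)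
        + (Qm.trace ^ 2 + 2 * (Qm * Qm).trace) / (2 * (p : ℝ) ^ 2) + Δ / 2)
    (Dq : Matrix (Fin p) (Fin p) ℝ) (hDq : Dq = Matrix.diagonal fun i => Real.sqrt (q i))
    (Qtilde : Ω → Matrix (Fin p) (Fin p) ℝ)
    (hQtilde : ∀ ω, Qtilde ω = M * P⁻¹ * Mᵀ + Dq * Ξ ω * Dq)
    (Qbar : Matrix (Fin p) (Fin p) ℝ)
    (hQbar : Qbar = M * P⁻¹ * Mᵀ + Matrix.diagonal q) :
    (∫ ω, R (Qtilde ω) ∂Pr)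
      = R Qbar + (p : ℝ)⁻¹ ^ 2 *
          (∑ i, ∑ j ∈ Finset.univ.erase i, q i * q j) / ((d : ℝ) - k) := by
  have hp0 : (p : ℝ) ≠ 0 := by
    have : (0:ℝ) < p := by exact_mod_cast Nat.lt_of_lt_of_le (by norm_num) hp
    exact ne_of_gt this
  have hk0 : (k : ℝ) ≠ 0 := by exact_mod_cast hk.ne'
  have hdk0 : (d : ℝ) - k ≠ 0 := by
    have : (k:ℝ) + 2 ≤ d := by exact_mod_cast hdk
    linarith
  set A := M * P⁻¹ * Mᵀ with hA
  -- entrywise description of Qtilde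
  have hentry : ∀ ω i j, Qtilde ω i j
      = A i j + Real.sqrt (q i) * Real.sqrt (q j) * Ξ ω i j := by
    intro ω i j
    rw [hQtilde, hDq]
    simp [Matrix.add_apply, Matrix.diagonal_mul, Matrix.mul_diagonal]
    ring
  -- integrability of the entries of Ξ and their squares
  have hint : ∀ i j, Integrable (fun ω => Ξ ω i j) Pr := by
    intro i j
    refine ⟨(hmeas i j).aestronglyMeasurable, ?_⟩
    refine HasFiniteIntegral.of_bounded (C := 1) (Filter.Eventually.of_forall fun ω => ?_)
    simpa [Real.norm_eq_abs] using hbdd ω i j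
  have hint2 : ∀ i j, Integrable (fun ω => (Ξ ω i j) ^ 2) Pr := by
    intro i j
    refine ⟨((hmeas i j).pow_const 2).aestronglyMeasurable, ?_⟩
    refine HasFiniteIntegral.of_bounded (C := 1) (Filter.Eventually.of_forall fun ω => ?_)
    have h := hbdd ω i j
    have : |Ξ ω i j| ^ 2 ≤ 1 := by nlinarith [abs_nonneg (Ξ ω i j)]
    simpa [Real.norm_eq_abs, abs_pow] using this
  -- entry product expansion
  have heq : ∀ i j, (fun ω => Qtilde ω i j * Qtilde ω j i)
      = (fun ω => A i j * A j i
          + Real.sqrt (q i) * Real.sqrt (q j) * (A i j + A j i) * Ξ ω i j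
          + q i * q j * (Ξ ω i j) ^ 2) := by
    intro i j
    funext ω
    rw [hentry ω i j, hentry ω j i, hsymm ω j i]
    have hs : Real.sqrt (q i) * Real.sqrt (q j) * (Real.sqrt (q i) * Real.sqrt (q j))
        = q i * q j := by
      rw [mul_mul_mul_comm, Real.mul_self_sqrt (hq i), Real.mul_self_sqrt (hq j)]
    linear_combination (Ξ ω i j) ^ 2 * hs
  have hintg : ∀ i j, Integrable (fun ω => Qtilde ω i j * Qtilde ω j i) Pr := by
    intro i j
    rw [heq]
    exact ((integrable_const _).add ((hint i j).const_mul _)).add ((hint2 i j).const_mul _)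
  -- entrywise integrals
  have hQbar_diag : ∀ i, Qbar i i = A i i + q i := by
    intro i
    simp [hQbar, Matrix.add_apply, Matrix.diagonal_apply_eq, hA]
  have hQbar_off : ∀ i j, i ≠ j → Qbar i j = A i j := by
    intro i j hij
    simp [hQbar, Matrix.add_apply, Matrix.diagonal_apply_ne _ hij, hA]
  have hprod : ∀ i j, (∫ ω, Qtilde ω i j * Qtilde ω j i ∂Pr)
      = Qbar i j * Qbar j i + (if i = j then 0 else q i * q j / ((d : ℝ) - k)) := by
    intro i j
    rw [heq]
    have h1 : Integrable (fun ω => A i j * A j i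
        + Real.sqrt (q i) * Real.sqrt (q j) * (A i j + A j i) * Ξ ω i j) Pr :=
      (integrable_const _).add ((hint i j).const_mul _)
    have h2 : Integrable (fun ω => q i * q j * (Ξ ω i j) ^ 2) Pr :=
      (hint2 i j).const_mul _
    rw [integral_add h1 h2,
      integral_add (integrable_const _) ((hint i j).const_mul _),
      integral_const, integral_const_mul, integral_const_mul]
    simp only [measure_univ, probReal_univ, ENNReal.toReal_one, smul_eq_mul, one_mul]
    rcases eq_or_ne i j with rfl | hij
    · simp only [hdiag]
      simp only [if_true]
      rw [integral_const, integral_const]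
      simp only [measure_univ, probReal_univ, ENNReal.toReal_one, smul_eq_mul, one_mul, one_pow]
      rw [hQbar_diag i]
      have hqi : Real.sqrt (q i) * Real.sqrt (q i) = q i := Real.mul_self_sqrt (hq i)
      linear_combination (2 * A i i) * hqi
    · rw [hmean i j hij, hvar i j hij, if_neg hij, hQbar_off i j hij,
        hQbar_off j i (Ne.symm hij)]
      ring
  -- sum over j with the diagonal removed
  have hsum_ite : ∀ (g : Fin p → ℝ) (i : Fin p),
      (∑ j, if i = j then 0 else g j) = ∑ j ∈ Finset.univ.erase i, g j := by
    intro g i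
    have h0 : (if i = i then (0:ℝ) else g i) = 0 := by simp
    calc (∑ j, if i = j then 0 else g j)
        = ∑ j ∈ Finset.univ.erase i, (if i = j then 0 else g j) :=
          (Finset.sum_erase (f := fun j => if i = j then (0:ℝ) else g j) Finset.univ h0).symm
      _ = ∑ j ∈ Finset.univ.erase i, g j :=
          Finset.sum_congr rfl fun j hj => if_neg (Ne.symm (Finset.mem_erase.mp hj).1)
  -- trace of square as a double sum
  have htrfun : ∀ (X : Matrix (Fin p) (Fin p) ℝ),
      (X * X).trace = ∑ i, ∑ j, X i j * X j i := by
    intro X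
    simp [Matrix.trace, Matrix.mul_apply, Matrix.diag]
  -- integrability of the trace function
  have htrInt : Integrable (fun ω => ((Qtilde ω) * (Qtilde ω)).trace) Pr := by
    simp only [htrfun]
    exact integrable_finset_sum _ fun i _ => integrable_finset_sum _ fun j _ => hintg i j
  -- averaged trace of the square
  have htr : (∫ ω, ((Qtilde ω) * (Qtilde ω)).trace ∂Pr)
      = (Qbar * Qbar).trace
        + (∑ i, ∑ j ∈ Finset.univ.erase i, q i * q j) / ((d : ℝ) - k) := by
    simp only [htrfun]
    rw [integral_finset_sum _ fun i _ => integrable_finset_sum _ fun j _ => hintg i j]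
    have hstep : ∀ i : Fin p, (∫ ω, ∑ j, Qtilde ω i j * Qtilde ω j i ∂Pr)
        = ∑ j, (∫ ω, Qtilde ω i j * Qtilde ω j i ∂Pr) :=
      fun i => integral_finset_sum _ fun j _ => hintg i j
    simp only [hstep, hprod]
    simp only [Finset.sum_add_distrib]
    congr 1
    rw [Finset.sum_div]
    refine Finset.sum_congr rfl fun i _ => ?_
    rw [hsum_ite (fun j => q i * q j / ((d : ℝ) - k)) i, Finset.sum_div]
  -- trace of Qtilde is constant
  have htrQ : ∀ ω, (Qtilde ω).trace = Qbar.trace := by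
    intro ω
    unfold Matrix.trace
    refine Finset.sum_congr rfl fun i _ => ?_
    simp only [Matrix.diag_apply, hentry ω i i, hdiag, hQbar_diag i, mul_one,
      Real.mul_self_sqrt (hq i)]
  -- pointwise decomposition of the risk
  have hRdecomp : ∀ ω, R (Qtilde ω)
      = R Qbar + (((Qtilde ω) * (Qtilde ω)).trace - (Qbar * Qbar).trace) / (p : ℝ) ^ 2 := by
    intro ω
    rw [hR, hR, htrQ ω]
    field_simp
    ring
  calc (∫ ω, R (Qtilde ω) ∂Pr)
      = ∫ ω, (R Qbar
          + (((Qtilde ω) * (Qtilde ω)).trace - (Qbar * Qbar).trace) / (p : ℝ) ^ 2) ∂Pr := by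
        simp only [hRdecomp]
    _ = R Qbar + ((∫ ω, ((Qtilde ω) * (Qtilde ω)).trace ∂Pr)
          - (Qbar * Qbar).trace) / (p : ℝ) ^ 2 := by
        have h2 : Integrable (fun ω =>
            (((Qtilde ω) * (Qtilde ω)).trace - (Qbar * Qbar).trace) / (p : ℝ) ^ 2) Pr :=
          (htrInt.sub (integrable_const _)).div_const _
        rw [integral_add (integrable_const _) h2,
          integral_const, integral_div, integral_sub htrInt (integrable_const _),
          integral_const]
        simp [measure_univ]
    _ = R Qbar + (p : ℝ)⁻¹ ^ 2 *
          (∑ i, ∑ j ∈ Finset.univ.erase i, q i * q j) / ((d : ℝ) - k) := by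
        rw [htr]
        field_simp
        ring
end

section
/- Let σ(x) = x². With Ω as in the teacher-student setting and Q⊥ = Q − M P⁻¹ Mᵀ, the orthogonal update function Ψ⊥(Ω), defined entrywise by Ψ⊥_{ij}(Ω) = E[(σ'(λ_i) λ⊥_j + σ'(λ_j) λ⊥_i) E] with (λ, λ⊥, λ*) centered Gaussian with covariance [[Q, Q⊥, M],[Q⊥, Q⊥, 0],[Mᵀ, 0, P]] and E = (1/k)Σ_r (λ*_r)² − (1/p)Σ_l λ_l², equals 4(Tr(P)/k − Tr(Q)/p) Q⊥ − (4/p)(Q Q⊥ + Q⊥ Q). -/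
open MeasureTheory ProbabilityTheory Real Filter Matrix
open scoped ENNReal NNReal

noncomputable section

lemma intPow (n : ℕ) : Integrable (fun x : ℝ => x ^ n * rexp (-(2⁻¹ : ℝ) * x ^ 2)) := by
  have h := integrable_rpow_mul_exp_neg_mul_sq (b := (2⁻¹ : ℝ)) (by norm_num)
    (s := (n : ℝ)) (by exact_mod_cast neg_one_lt_zero.trans_le (Nat.cast_nonneg n))
  simpa [Real.rpow_natCast] using h

lemma expDeriv (x : ℝ) :
    HasDerivAt (fun y : ℝ => -rexp (-(2⁻¹ : ℝ) * y ^ 2)) (x * rexp (-(2⁻¹ : ℝ) * x ^ 2)) x := by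
  have h1 : HasDerivAt (fun y : ℝ => -(2⁻¹ : ℝ) * y ^ 2) (-(2⁻¹ : ℝ) * (2 * x ^ 1)) x := by
    simpa using (hasDerivAt_pow 2 x).const_mul (-(2⁻¹ : ℝ))
  have h2 := ((Real.hasDerivAt_exp _).comp x h1).neg
  exact h2.congr_deriv (by ring)

lemma expTendsTop : Tendsto (fun y : ℝ => -rexp (-(2⁻¹ : ℝ) * y ^ 2)) atTop (nhds 0) := by
  rw [show (0:ℝ) = -0 by ring]
  apply Tendsto.neg
  apply Real.tendsto_exp_atBot.comp
  exact Tendsto.const_mul_atTop_of_neg (by norm_num) (tendsto_pow_atTop (by norm_num))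

lemma expTendsBot : Tendsto (fun y : ℝ => -rexp (-(2⁻¹ : ℝ) * y ^ 2)) atBot (nhds 0) := by
  rw [show (0:ℝ) = -0 by ring]
  apply Tendsto.neg
  apply Real.tendsto_exp_atBot.comp
  apply Tendsto.const_mul_atTop_of_neg (by norm_num)
  have h1 : Tendsto (fun y : ℝ => y ^ 2) atBot atTop := by
    have h := (tendsto_pow_atTop (α := ℝ) (n := 2) (by norm_num)).comp tendsto_neg_atBot_atTop
    have : ((fun y : ℝ => y ^ 2) ∘ fun y : ℝ => -y) = fun y : ℝ => y ^ 2 := by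
      ext y; simp [Function.comp]
    rwa [this] at h
  exact h1

lemma J1 : ∫ x : ℝ, x * rexp (-(2⁻¹ : ℝ) * x ^ 2) = 0 := by
  have h := integral_of_hasDerivAt_of_tendsto (f := fun y : ℝ => -rexp (-(2⁻¹ : ℝ) * y ^ 2))
    (f' := fun x : ℝ => x * rexp (-(2⁻¹ : ℝ) * x ^ 2)) expDeriv
    (by simpa using intPow 1) expTendsBot expTendsTop
  simpa using h

lemma Jrec (n : ℕ) : ∫ x : ℝ, x ^ (n + 2) * rexp (-(2⁻¹ : ℝ) * x ^ 2)
    = (n + 1 : ℝ) * ∫ x : ℝ, x ^ n * rexp (-(2⁻¹ : ℝ) * x ^ 2) := by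
  have hu : ∀ x : ℝ, HasDerivAt (fun y : ℝ => y ^ (n + 1)) ((n + 1 : ℝ) * x ^ n) x := by
    intro x; simpa using hasDerivAt_pow (n + 1) x
  have h := integral_mul_deriv_eq_deriv_mul_of_integrable (fun x _ => hu x) (fun x _ => expDeriv x)
    (Integrable.congr (intPow (n + 2)) ?_) (Integrable.congr ((intPow n).const_mul (-(n+1:ℝ))) ?_)
    (Integrable.congr ((intPow (n+1)).neg) ?_)
  · rw [show ∫ x : ℝ, x ^ (n+2) * rexp (-(2⁻¹:ℝ) * x ^ 2)
        = ∫ x : ℝ, x ^ (n+1) * (x * rexp (-(2⁻¹:ℝ) * x ^ 2)) from by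
      congr 1; ext x; ring, h]
    rw [← integral_neg]
    rw [show ∫ x : ℝ, -((n+1:ℝ) * x ^ n * -rexp (-(2⁻¹:ℝ) * x ^ 2))
        = ∫ x : ℝ, (n+1:ℝ) * (x ^ n * rexp (-(2⁻¹:ℝ) * x ^ 2)) from by congr 1; ext x; ring]
    rw [integral_const_mul]
  · filter_upwards with x; simp [Pi.mul_apply]; try ring
  · filter_upwards with x; simp [Pi.mul_apply]; try ring
  · filter_upwards with x; simp [Pi.mul_apply]; try ring

lemma J0 : ∫ x : ℝ, rexp (-(2⁻¹ : ℝ) * x ^ 2) = Real.sqrt (2 * Real.pi) := by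
  have h := integral_gaussian (2⁻¹ : ℝ)
  rw [h]
  congr 1
  field_simp

end

noncomputable section

lemma pdf_eq (x : ℝ) : gaussianPDFReal 0 1 x = (Real.sqrt (2 * π))⁻¹ * rexp (-(2⁻¹:ℝ) * x ^ 2) := by
  unfold gaussianPDFReal
  rw [NNReal.coe_one, mul_one, sub_zero]
  congr 1
  ring

lemma gauss_int (f : ℝ → ℝ) :
    ∫ x, f x ∂(gaussianReal 0 1) = (Real.sqrt (2 * π))⁻¹ * ∫ x, f x * rexp (-(2⁻¹:ℝ) * x ^ 2) := by
  rw [gaussianReal_of_var_ne_zero 0 one_ne_zero]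
  have hd : gaussianPDF 0 1 = fun x => ((gaussianPDFReal 0 1 x).toNNReal : ℝ≥0∞) := rfl
  rw [hd, integral_withDensity_eq_integral_smul
    ((measurable_gaussianPDFReal 0 1).real_toNNReal)]
  rw [show (fun x => (gaussianPDFReal 0 1 x).toNNReal • f x)
      = fun x => (Real.sqrt (2 * π))⁻¹ * (f x * rexp (-(2⁻¹:ℝ) * x ^ 2)) from ?_]
  · exact integral_const_mul _ _
  · ext x
    rw [NNReal.smul_def, Real.coe_toNNReal _ (gaussianPDFReal_nonneg 0 1 x), pdf_eq, smul_eq_mul]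
    ring

lemma gauss_integrable_pow (n : ℕ) : Integrable (fun x : ℝ => x ^ n) (gaussianReal 0 1) := by
  rw [gaussianReal_of_var_ne_zero 0 one_ne_zero]
  have hd : gaussianPDF 0 1 = fun x => ((gaussianPDFReal 0 1 x).toNNReal : ℝ≥0∞) := rfl
  rw [hd, integrable_withDensity_iff_integrable_smul
    ((measurable_gaussianPDFReal 0 1).real_toNNReal)]
  apply Integrable.congr ((intPow n).const_mul ((Real.sqrt (2 * π))⁻¹))
  filter_upwards with x
  rw [NNReal.smul_def, Real.coe_toNNReal _ (gaussianPDFReal_nonneg 0 1 x), pdf_eq, smul_eq_mul]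
  ring

end

noncomputable section

def gmom (n : ℕ) : ℝ := ∫ x, x ^ n ∂(gaussianReal 0 1)

lemma sqrt2pi_pos : 0 < Real.sqrt (2 * π) := Real.sqrt_pos.mpr (by positivity)

lemma gmom_eq (n : ℕ) : gmom n = (Real.sqrt (2 * π))⁻¹ * ∫ x : ℝ, x ^ n * rexp (-(2⁻¹:ℝ) * x ^ 2) :=
  gauss_int _

lemma gmom0 : gmom 0 = 1 := by
  rw [gmom_eq]
  simp only [pow_zero, one_mul, J0]
  exact inv_mul_cancel₀ sqrt2pi_pos.ne'

lemma gmom1 : gmom 1 = 0 := by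
  rw [gmom_eq]
  simp only [pow_one, J1, mul_zero]

lemma gmom2 : gmom 2 = 1 := by
  rw [gmom_eq, show (2:ℕ) = 0 + 2 from rfl, Jrec 0]
  simp only [pow_zero, one_mul, J0, Nat.cast_zero, zero_add, one_mul]
  exact inv_mul_cancel₀ sqrt2pi_pos.ne'

lemma gmom3 : gmom 3 = 0 := by
  rw [gmom_eq, show (3:ℕ) = 1 + 2 from rfl, Jrec 1]
  simp only [pow_one, J1, mul_zero]

lemma gmom4 : gmom 4 = 3 := by
  rw [gmom_eq, show (4:ℕ) = 2 + 2 from rfl, Jrec 2, (Jrec 0 : ∫ x : ℝ, x ^ 2 * rexp (-(2⁻¹ : ℝ) * x ^ 2) = _)]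
  simp only [pow_zero, one_mul, J0, Nat.cast_zero, Nat.cast_ofNat, zero_add, one_mul]
  field_simp
  norm_num

end

noncomputable section
variable {ι : Type*} [Fintype ι]

lemma pi_integrable_prodpow (m : ι → ℕ) :
    Integrable (fun x : ι → ℝ => ∏ t, (x t) ^ (m t)) (Measure.pi fun _ => gaussianReal 0 1) := by
  letI : MeasureSpace ℝ := ⟨gaussianReal 0 1⟩
  haveI : SigmaFinite (volume : Measure ℝ) := inferInstanceAs (SigmaFinite (gaussianReal 0 1))
  exact Integrable.fintype_prod (f := fun t (y : ℝ) => y ^ (m t)) (fun i => gauss_integrable_pow (m i))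

lemma pi_integral_prodpow (m : ι → ℕ) :
    ∫ x : ι → ℝ, ∏ t, (x t) ^ (m t) ∂(Measure.pi fun _ => gaussianReal 0 1)
      = ∏ t, gmom (m t) := by
  letI : MeasureSpace ℝ := ⟨gaussianReal 0 1⟩
  haveI : SigmaFinite (volume : Measure ℝ) := inferInstanceAs (SigmaFinite (gaussianReal 0 1))
  exact integral_fintype_prod_eq_prod (fun t (y : ℝ) => y ^ (m t))

end

noncomputable section
variable {ι : Type*} [Fintype ι] [DecidableEq ι]

def cnt (a b c d : ι) (t : ι) : ℕ :=
  (if a = t then 1 else 0) + (if b = t then 1 else 0)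
    + (if c = t then 1 else 0) + (if d = t then 1 else 0)

def ee (a b : ι) : ℝ := if a = b then 1 else 0

lemma prod_pow_single (w : ι) (x : ι → ℝ) :
    ∏ t, (x t) ^ (if w = t then 1 else 0) = x w := by
  rw [Finset.prod_congr rfl (fun t _ => show (x t) ^ (if w = t then 1 else 0)
      = if w = t then x t else 1 by split_ifs <;> simp)]
  simp [Finset.prod_ite_eq]

lemma mono_eq (a b c d : ι) (x : ι → ℝ) :
    x a * x b * x c * x d = ∏ t, (x t) ^ (cnt a b c d t) := by
  simp only [cnt, pow_add, Finset.prod_mul_distrib, prod_pow_single]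

lemma prod_gmom_all (m : ι → ℕ) (a : ι) (hm : ∀ t, m t = if a = t then 4 else 0) :
    ∏ t, gmom (m t) = 3 := by
  rw [Finset.prod_congr rfl (fun t _ => show gmom (m t) = if a = t then (3:ℝ) else 1 by
    rw [hm t]; split_ifs <;> simp [gmom4, gmom0])]
  simp [Finset.prod_ite_eq]

lemma prod_gmom_pair (m : ι → ℕ) (a c : ι) (h : a ≠ c)
    (hm : ∀ t, m t = (if a = t then 2 else 0) + (if c = t then 2 else 0)) :
    ∏ t, gmom (m t) = 1 := by
  apply Finset.prod_eq_one
  intro t _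
  rw [hm t]
  by_cases h1 : a = t <;> by_cases h2 : c = t
  · exact absurd (h1.trans h2.symm) h
  · simp [h1, h2, gmom2]
  · simp [h1, h2, gmom2]
  · simp [h1, h2, gmom0]

lemma prod_gmom_zero (m : ι → ℕ) (w : ι) (hw : gmom (m w) = 0) :
    ∏ t, gmom (m t) = 0 :=
  Finset.prod_eq_zero (Finset.mem_univ w) hw

lemma isserlis_val (a b c d : ι) :
    ∏ t, gmom (cnt a b c d t) = ee a b * ee c d + ee a c * ee b d + ee a d * ee b c := by
  by_cases h1 : a = b ∧ c = d
  · obtain ⟨rfl, rfl⟩ := h1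
    by_cases hac : a = c
    · subst hac
      rw [prod_gmom_all _ a (fun t => by simp only [cnt]; split_ifs <;> omega)]
      simp [ee]
      norm_num
    · rw [prod_gmom_pair _ a c hac (fun t => by simp only [cnt]; split_ifs <;> omega)]
      simp [ee, hac]
  · by_cases h2 : a = c ∧ b = d
    · obtain ⟨rfl, rfl⟩ := h2
      have hab : a ≠ b := fun h => h1 ⟨h, h ▸ rfl⟩
      rw [prod_gmom_pair _ a b hab (fun t => by simp only [cnt]; split_ifs <;> omega)]
      simp [ee, hab, Ne.symm hab]
    · by_cases h3 : a = d ∧ b = c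
      · obtain ⟨rfl, rfl⟩ := h3
        have hab : a ≠ b := fun h => h1 ⟨h, h ▸ rfl⟩
        rw [prod_gmom_pair _ a b hab (fun t => by simp only [cnt]; split_ifs <;> omega)]
        simp [ee, hab, Ne.symm hab]
      · -- RHS is zero
        have hr : ee a b * ee c d + ee a c * ee b d + ee a d * ee b c = 0 := by
          have r1 : ee a b * ee c d = 0 := by
            by_cases h : a = b
            · have : c ≠ d := fun hc => h1 ⟨h, hc⟩
              simp [ee, this]
            · simp [ee, h]
          have r2 : ee a c * ee b d = 0 := by
            by_cases h : a = c
            · have : b ≠ d := fun hc => h2 ⟨h, hc⟩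
              simp [ee, this]
            · simp [ee, h]
          have r3 : ee a d * ee b c = 0 := by
            by_cases h : a = d
            · have : b ≠ c := fun hc => h3 ⟨h, hc⟩
              simp [ee, this]
            · simp [ee, h]
          rw [r1, r2, r3]; ring
        rw [hr]
        -- LHS is zero: find an odd-count witness
        by_cases hab : a = b
        · subst hab
          have hcd : c ≠ d := fun hc => h1 ⟨rfl, hc⟩
          apply prod_gmom_zero _ c
          by_cases hac : a = c
          · subst hac
            simp [cnt, Ne.symm hcd, hcd, gmom3]
          · simp [cnt, hac, Ne.symm hcd, hcd, gmom1]
        · by_cases hac : a = c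
          · subst hac
            have hbd : b ≠ d := fun hc => h2 ⟨rfl, hc⟩
            apply prod_gmom_zero _ b
            simp [cnt, Ne.symm hab, hab, Ne.symm hbd, hbd, gmom1]
          · by_cases had : a = d
            · subst had
              have hbc : b ≠ c := fun hc => h3 ⟨rfl, hc⟩
              apply prod_gmom_zero _ b
              simp [cnt, Ne.symm hab, hab, Ne.symm hbc, hbc, gmom1]
            · apply prod_gmom_zero _ a
              simp [cnt, Ne.symm hab, Ne.symm hac, Ne.symm had, gmom1]


lemma hS (A : Matrix ι ι ℝ) (i j : ι) :
    (A * Aᵀ) i j = ∑ a, ∑ b, (A i a * A j b) * ee a b := by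
  rw [Matrix.mul_apply]
  apply Finset.sum_congr rfl; intro a _
  rw [Matrix.transpose_apply]
  simp [ee, mul_ite, Finset.sum_ite_eq]

lemma quad_sum (A : Matrix ι ι ℝ) (i j k l : ι) :
    ∑ q : ι × ι × ι × ι, (A i q.1 * A j q.2.1 * A k q.2.2.1 * A l q.2.2.2)
      * (ee q.1 q.2.1 * ee q.2.2.1 q.2.2.2
        + ee q.1 q.2.2.1 * ee q.2.1 q.2.2.2
        + ee q.1 q.2.2.2 * ee q.2.1 q.2.2.1)
    = (A * Aᵀ) i j * (A * Aᵀ) k l + (A * Aᵀ) i k * (A * Aᵀ) j l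
      + (A * Aᵀ) i l * (A * Aᵀ) j k := by
  have e1 : ∑ q : ι × ι × ι × ι, (A i q.1 * A j q.2.1 * A k q.2.2.1 * A l q.2.2.2)
      * (ee q.1 q.2.1 * ee q.2.2.1 q.2.2.2) = (A * Aᵀ) k l * (A * Aᵀ) i j := by
    rw [hS A k l, hS A i j]
    simp only [Finset.sum_mul, Finset.mul_sum, Fintype.sum_prod_type]
    apply Finset.sum_congr rfl; intro a _
    apply Finset.sum_congr rfl; intro b _
    apply Finset.sum_congr rfl; intro c _
    apply Finset.sum_congr rfl; intro d _
    ring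
  have e2 : ∑ q : ι × ι × ι × ι, (A i q.1 * A j q.2.1 * A k q.2.2.1 * A l q.2.2.2)
      * (ee q.1 q.2.2.1 * ee q.2.1 q.2.2.2) = (A * Aᵀ) j l * (A * Aᵀ) i k := by
    rw [hS A j l, hS A i k]
    simp only [Finset.sum_mul, Finset.mul_sum, Fintype.sum_prod_type]
    apply Finset.sum_congr rfl; intro a _
    rw [Finset.sum_comm]
    apply Finset.sum_congr rfl; intro b _
    apply Finset.sum_congr rfl; intro c _
    apply Finset.sum_congr rfl; intro d _
    ring
  have e3 : ∑ q : ι × ι × ι × ι, (A i q.1 * A j q.2.1 * A k q.2.2.1 * A l q.2.2.2)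
      * (ee q.1 q.2.2.2 * ee q.2.1 q.2.2.1) = (A * Aᵀ) j k * (A * Aᵀ) i l := by
    rw [hS A j k, hS A i l]
    simp only [Finset.sum_mul, Finset.mul_sum, Fintype.sum_prod_type]
    apply Finset.sum_congr rfl; intro a _
    rw [Finset.sum_congr rfl (fun b _ => Finset.sum_comm), Finset.sum_comm]
    apply Finset.sum_congr rfl; intro b _
    apply Finset.sum_congr rfl; intro c _
    apply Finset.sum_congr rfl; intro d _
    ring
  have hsplit : ∑ q : ι × ι × ι × ι, (A i q.1 * A j q.2.1 * A k q.2.2.1 * A l q.2.2.2)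
      * (ee q.1 q.2.1 * ee q.2.2.1 q.2.2.2
        + ee q.1 q.2.2.1 * ee q.2.1 q.2.2.2
        + ee q.1 q.2.2.2 * ee q.2.1 q.2.2.1)
      = ∑ q : ι × ι × ι × ι, (A i q.1 * A j q.2.1 * A k q.2.2.1 * A l q.2.2.2)
      * (ee q.1 q.2.1 * ee q.2.2.1 q.2.2.2)
      + (∑ q : ι × ι × ι × ι, (A i q.1 * A j q.2.1 * A k q.2.2.1 * A l q.2.2.2)
      * (ee q.1 q.2.2.1 * ee q.2.1 q.2.2.2)
      + ∑ q : ι × ι × ι × ι, (A i q.1 * A j q.2.1 * A k q.2.2.1 * A l q.2.2.2)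
      * (ee q.1 q.2.2.2 * ee q.2.1 q.2.2.1)) := by
    rw [← Finset.sum_add_distrib, ← Finset.sum_add_distrib]
    apply Finset.sum_congr rfl; intro q _
    ring
  rw [hsplit, e1, e2, e3]
  ring


lemma measurable_mulVec (A : Matrix ι ι ℝ) :
    Measurable A.mulVec := by
  apply measurable_pi_lambda
  intro i
  show Measurable fun x => A.mulVec x i
  simp only [Matrix.mulVec, dotProduct]
  exact Finset.measurable_sum _ fun a _ => (measurable_pi_apply a).const_mul _

lemma integrable_mono4 (a b c d : ι) :
    Integrable (fun x : ι → ℝ => x a * x b * x c * x d)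
      (Measure.pi fun _ : ι => gaussianReal 0 1) :=
  (pi_integrable_prodpow (cnt a b c d)).congr
    (Filter.Eventually.of_forall fun x => (mono_eq a b c d x).symm)

lemma isserlis (a b c d : ι) :
    ∫ x : ι → ℝ, x a * x b * x c * x d ∂(Measure.pi fun _ : ι => gaussianReal 0 1)
      = ee a b * ee c d + ee a c * ee b d + ee a d * ee b c := by
  rw [show (fun x : ι → ℝ => x a * x b * x c * x d)
      = fun x : ι → ℝ => ∏ t, (x t) ^ (cnt a b c d t) from funext (mono_eq a b c d)]
  rw [pi_integral_prodpow, isserlis_val]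

lemma Ssym (A : Matrix ι ι ℝ) (a b : ι) : (A * Aᵀ) a b = (A * Aᵀ) b a := by
  simp only [Matrix.mul_apply, Matrix.transpose_apply]
  exact Finset.sum_congr rfl fun t _ => mul_comm _ _

lemma moment4_map (A : Matrix ι ι ℝ) (i j k l : ι) :
    ∫ v, v i * v j * v k * v l
        ∂((Measure.pi fun _ : ι => gaussianReal 0 1).map A.mulVec)
      = (A * Aᵀ) i j * (A * Aᵀ) k l + (A * Aᵀ) i k * (A * Aᵀ) j l
        + (A * Aᵀ) i l * (A * Aᵀ) j k := by
  rw [integral_map (measurable_mulVec A).aemeasurable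
    (by fun_prop)]
  have hexp : ∀ x : ι → ℝ,
      A.mulVec x i * A.mulVec x j * A.mulVec x k * A.mulVec x l
      = ∑ q : ι × ι × ι × ι, (A l q.1 * A k q.2.1 * A j q.2.2.1 * A i q.2.2.2)
          * (x q.1 * x q.2.1 * x q.2.2.1 * x q.2.2.2) := by
    intro x
    simp only [Matrix.mulVec, dotProduct, Fintype.sum_prod_type,
      Finset.sum_mul, Finset.mul_sum]
    apply Finset.sum_congr rfl; intro a _
    apply Finset.sum_congr rfl; intro b _
    apply Finset.sum_congr rfl; intro c _
    apply Finset.sum_congr rfl; intro d _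
    ring
  rw [show (fun x : ι → ℝ => A.mulVec x i * A.mulVec x j * A.mulVec x k * A.mulVec x l)
      = fun x : ι → ℝ => ∑ q : ι × ι × ι × ι,
          (A l q.1 * A k q.2.1 * A j q.2.2.1 * A i q.2.2.2)
          * (x q.1 * x q.2.1 * x q.2.2.1 * x q.2.2.2) from funext hexp]
  rw [integral_finset_sum _ (fun q _ => (integrable_mono4 q.1 q.2.1 q.2.2.1 q.2.2.2).const_mul _)]
  simp only [integral_const_mul, isserlis]
  rw [quad_sum A l k j i]
  rw [Ssym A l k, Ssym A j i, Ssym A l j, Ssym A k i, Ssym A l i, Ssym A k j]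
  ring

lemma integrable_mono4_map (A : Matrix ι ι ℝ) (i j k l : ι) :
    Integrable (fun v : ι → ℝ => v i * v j * v k * v l)
      ((Measure.pi fun _ : ι => gaussianReal 0 1).map A.mulVec) := by
  rw [integrable_map_measure
    (by fun_prop)
    (measurable_mulVec A).aemeasurable]
  have hexp : ∀ x : ι → ℝ,
      A.mulVec x i * A.mulVec x j * A.mulVec x k * A.mulVec x l
      = ∑ q : ι × ι × ι × ι, (A l q.1 * A k q.2.1 * A j q.2.2.1 * A i q.2.2.2)
          * (x q.1 * x q.2.1 * x q.2.2.1 * x q.2.2.2) := by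
    intro x
    simp only [Matrix.mulVec, dotProduct, Fintype.sum_prod_type,
      Finset.sum_mul, Finset.mul_sum]
    apply Finset.sum_congr rfl; intro a _
    apply Finset.sum_congr rfl; intro b _
    apply Finset.sum_congr rfl; intro c _
    apply Finset.sum_congr rfl; intro d _
    ring
  rw [show ((fun v : ι → ℝ => v i * v j * v k * v l) ∘ A.mulVec)
      = fun x : ι → ℝ => ∑ q : ι × ι × ι × ι,
          (A l q.1 * A k q.2.1 * A j q.2.2.1 * A i q.2.2.2)
          * (x q.1 * x q.2.1 * x q.2.2.1 * x q.2.2.2) from funext fun x => hexp x]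
  exact integrable_finset_sum _ fun q _ =>
    (integrable_mono4 q.1 q.2.1 q.2.2.1 q.2.2.2).const_mul _

end





open MeasureTheory ProbabilityTheory Matrix

/-- For the square activation (`σ'(x) = 2x`) and a centered Gaussian vector
`(λ, λ⊥, λ*)` with covariance `[[Q, Q⊥, M],[Q⊥, Q⊥, 0],[Mᵀ, 0, P]]` (where
`Q⊥ = Q − M P⁻¹ Mᵀ`), the orthogonal update
`Ψ⊥_{ij}(Ω) = E[(σ'(λ_i) λ⊥_j + σ'(λ_j) λ⊥_i) E]` with
`E = (1/k) Σ_r (λ*_r)² − (1/p) Σ_l λ_l²` equals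
`4(Tr(P)/k − Tr(Q)/p) Q⊥ − (4/p)(Q Q⊥ + Q⊥ Q)`. -/
theorem squared_activation_PsiPerp_formula
    {p k : ℕ} (hp : 0 < p) (hk : 0 < k)
    (Q Qperp : Matrix (Fin p) (Fin p) ℝ) (M : Matrix (Fin p) (Fin k) ℝ)
    (P : Matrix (Fin k) (Fin k) ℝ) (hP : P.PosDef)
    (hQperp : Qperp = Q - M * P⁻¹ * Mᵀ)
    (A : Matrix ((Fin p ⊕ Fin p) ⊕ Fin k) ((Fin p ⊕ Fin p) ⊕ Fin k) ℝ)
    (hA : A * Aᵀ = Matrix.fromBlocks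
      (Matrix.fromBlocks Q Qperp Qperp Qperp)
      (Matrix.fromRows M 0)
      (Matrix.fromCols Mᵀ 0) P)
    (μ : Measure ((Fin p ⊕ Fin p) ⊕ Fin k → ℝ))
    (hμ : μ = (Measure.pi fun _ : (Fin p ⊕ Fin p) ⊕ Fin k => gaussianReal 0 1).map A.mulVec)
    (E : ((Fin p ⊕ Fin p) ⊕ Fin k → ℝ) → ℝ)
    (hE : ∀ v, E v = (k : ℝ)⁻¹ * ∑ r, (v (Sum.inr r)) ^ 2
        - (p : ℝ)⁻¹ * ∑ l, (v (Sum.inl (Sum.inl l))) ^ 2) :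
    ∀ (i j : Fin p),
      ∫ v, (2 * v (Sum.inl (Sum.inl i)) * v (Sum.inl (Sum.inr j))
          + 2 * v (Sum.inl (Sum.inl j)) * v (Sum.inl (Sum.inr i))) * E v ∂μ
        = 4 * (P.trace / k - Q.trace / p) * Qperp i j
          - 4 / p * (Q * Qperp + Qperp * Q) i j := by
  intro i j
  subst hμ
  have hsq : (1:ℝ) = 1 := rfl
  set a : (Fin p ⊕ Fin p) ⊕ Fin k := Sum.inl (Sum.inl i) with ha
  set b : (Fin p ⊕ Fin p) ⊕ Fin k := Sum.inl (Sum.inr j) with hb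
  set a' : (Fin p ⊕ Fin p) ⊕ Fin k := Sum.inl (Sum.inl j) with ha'
  set b' : (Fin p ⊕ Fin p) ⊕ Fin k := Sum.inl (Sum.inr i) with hb'
  set ν := Measure.pi fun _ : (Fin p ⊕ Fin p) ⊕ Fin k => gaussianReal 0 1 with hν
  have hInt : ∀ w x y z : (Fin p ⊕ Fin p) ⊕ Fin k, Integrable (fun v : (Fin p ⊕ Fin p) ⊕ Fin k → ℝ => v w * v x * v y * v z)
      (ν.map A.mulVec) := fun w x y z => integrable_mono4_map A w x y z
  have hT : ∀ w x y z : (Fin p ⊕ Fin p) ⊕ Fin k, ∫ v : (Fin p ⊕ Fin p) ⊕ Fin k → ℝ, v w * v x * v y * v z ∂(ν.map A.mulVec)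
      = (A * Aᵀ) w x * (A * Aᵀ) y z + (A * Aᵀ) w y * (A * Aᵀ) x z
        + (A * Aᵀ) w z * (A * Aᵀ) x y := fun w x y z => moment4_map A w x y z
  have hptw : (fun v : (Fin p ⊕ Fin p) ⊕ Fin k → ℝ =>
        (2 * v a * v b + 2 * v a' * v b') * E v)
      = fun v : (Fin p ⊕ Fin p) ⊕ Fin k → ℝ =>
        (k : ℝ)⁻¹ * ∑ r, (2 * (v a * v b * v (Sum.inr r) * v (Sum.inr r))
            + 2 * (v a' * v b' * v (Sum.inr r) * v (Sum.inr r)))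
        - (p : ℝ)⁻¹ * ∑ l, (2 * (v a * v b * v (Sum.inl (Sum.inl l)) * v (Sum.inl (Sum.inl l)))
            + 2 * (v a' * v b' * v (Sum.inl (Sum.inl l)) * v (Sum.inl (Sum.inl l)))) := by
    funext v
    rw [hE v, mul_sub]
    congr 1
    · rw [mul_left_comm, Finset.mul_sum]
      congr 1
      apply Finset.sum_congr rfl; intro r _
      ring
    · rw [mul_left_comm, Finset.mul_sum]
      congr 1
      apply Finset.sum_congr rfl; intro l _
      ring
  rw [hptw]
  have I1 : Integrable (fun v : (Fin p ⊕ Fin p) ⊕ Fin k → ℝ =>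
      (k : ℝ)⁻¹ * ∑ r, (2 * (v a * v b * v (Sum.inr r) * v (Sum.inr r))
        + 2 * (v a' * v b' * v (Sum.inr r) * v (Sum.inr r)))) (ν.map A.mulVec) :=
    ((integrable_finset_sum _ fun r _ =>
      ((hInt a b (Sum.inr r) (Sum.inr r)).const_mul 2).add
        ((hInt a' b' (Sum.inr r) (Sum.inr r)).const_mul 2)).const_mul _)
  have I2 : Integrable (fun v : (Fin p ⊕ Fin p) ⊕ Fin k → ℝ =>
      (p : ℝ)⁻¹ * ∑ l, (2 * (v a * v b * v (Sum.inl (Sum.inl l)) * v (Sum.inl (Sum.inl l)))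
        + 2 * (v a' * v b' * v (Sum.inl (Sum.inl l)) * v (Sum.inl (Sum.inl l))))) (ν.map A.mulVec) :=
    ((integrable_finset_sum _ fun l _ =>
      ((hInt a b (Sum.inl (Sum.inl l)) (Sum.inl (Sum.inl l))).const_mul 2).add
        ((hInt a' b' (Sum.inl (Sum.inl l)) (Sum.inl (Sum.inl l))).const_mul 2)).const_mul _)
  rw [integral_sub I1 I2, integral_const_mul, integral_const_mul,
    integral_finset_sum (f := fun (r : Fin k) (v : (Fin p ⊕ Fin p) ⊕ Fin k → ℝ) =>
        2 * (v a * v b * v (Sum.inr r) * v (Sum.inr r))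
        + 2 * (v a' * v b' * v (Sum.inr r) * v (Sum.inr r))) _ (fun r _ => by
      exact ((hInt a b (Sum.inr r) (Sum.inr r)).const_mul 2).add
        ((hInt a' b' (Sum.inr r) (Sum.inr r)).const_mul 2)),
    integral_finset_sum (f := fun (l : Fin p) (v : (Fin p ⊕ Fin p) ⊕ Fin k → ℝ) =>
        2 * (v a * v b * v (Sum.inl (Sum.inl l)) * v (Sum.inl (Sum.inl l)))
        + 2 * (v a' * v b' * v (Sum.inl (Sum.inl l)) * v (Sum.inl (Sum.inl l)))) _ (fun l _ => by
      exact ((hInt a b (Sum.inl (Sum.inl l)) (Sum.inl (Sum.inl l))).const_mul 2).add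
        ((hInt a' b' (Sum.inl (Sum.inl l)) (Sum.inl (Sum.inl l))).const_mul 2))]
  have hAdd : ∀ w : (Fin p ⊕ Fin p) ⊕ Fin k,
      ∫ v : (Fin p ⊕ Fin p) ⊕ Fin k → ℝ,
        (2 * (v a * v b * v w * v w) + 2 * (v a' * v b' * v w * v w)) ∂(ν.map A.mulVec)
      = 2 * ((A * Aᵀ) a b * (A * Aᵀ) w w + (A * Aᵀ) a w * (A * Aᵀ) b w
            + (A * Aᵀ) a w * (A * Aᵀ) b w)
        + 2 * ((A * Aᵀ) a' b' * (A * Aᵀ) w w + (A * Aᵀ) a' w * (A * Aᵀ) b' w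
            + (A * Aᵀ) a' w * (A * Aᵀ) b' w) := by
    intro w
    rw [integral_add (f := fun v : (Fin p ⊕ Fin p) ⊕ Fin k → ℝ =>
        2 * (v a * v b * v w * v w)) (g := fun v : (Fin p ⊕ Fin p) ⊕ Fin k → ℝ =>
        2 * (v a' * v b' * v w * v w))
      (by exact (hInt a b w w).const_mul 2) (by exact (hInt a' b' w w).const_mul 2),
      integral_const_mul, integral_const_mul, hT, hT]
  simp only [hAdd]
  simp only [ha, hb, ha', hb', hA, Matrix.fromBlocks_apply₁₁, Matrix.fromBlocks_apply₁₂,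
    Matrix.fromBlocks_apply₂₁, Matrix.fromBlocks_apply₂₂, Matrix.fromRows_apply_inl,
    Matrix.fromRows_apply_inr, Matrix.fromCols_apply_inl, Matrix.fromCols_apply_inr,
    Matrix.zero_apply, Matrix.transpose_apply, mul_zero, zero_mul, add_zero, zero_add]
  have hQs : ∀ x y : Fin p, Q x y = Q y x := by
    intro x y
    have h := Ssym A (Sum.inl (Sum.inl x)) (Sum.inl (Sum.inl y))
    rw [hA] at h
    simpa using h
  have hQps : ∀ x y : Fin p, Qperp x y = Qperp y x := by
    intro x y
    have h := Ssym A (Sum.inl (Sum.inl x)) (Sum.inl (Sum.inr y))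
    rw [hA] at h
    simpa using h
  simp only [hQps j, hQs j]
  have htP : P.trace = ∑ x, P x x := by simp [Matrix.trace, Matrix.diag]
  have htQ : Q.trace = ∑ x, Q x x := by simp [Matrix.trace, Matrix.diag]
  have hQQp : (Q * Qperp) i j = ∑ x, Q i x * Qperp x j := by simp [Matrix.mul_apply]
  have hQpQ : (Qperp * Q) i j = ∑ x, Qperp i x * Q x j := by simp [Matrix.mul_apply]
  rw [Matrix.add_apply, htP, htQ, hQQp, hQpQ]
  have e1 : ∑ x : Fin k, (2 * (Qperp i j * P x x) + 2 * (Qperp i j * P x x))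
      = 4 * Qperp i j * ∑ x : Fin k, P x x := by
    rw [Finset.mul_sum]
    apply Finset.sum_congr rfl; intro x _; ring
  have e2 : ∑ x : Fin p, (2 * (Qperp i j * Q x x + Q i x * Qperp x j + Q i x * Qperp x j)
        + 2 * (Qperp i j * Q x x + Q x j * Qperp i x + Q x j * Qperp i x))
      = 4 * Qperp i j * ∑ x, Q x x + 4 * ∑ x, Q i x * Qperp x j
        + 4 * ∑ x, Qperp i x * Q x j := by
    rw [Finset.mul_sum, Finset.mul_sum, Finset.mul_sum,
      ← Finset.sum_add_distrib, ← Finset.sum_add_distrib]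
    apply Finset.sum_congr rfl; intro x _; ring
  rw [e1, e2]
  have hk0 : (k : ℝ) ≠ 0 := Nat.cast_ne_zero.mpr hk.ne'
  have hp0 : (p : ℝ) ≠ 0 := Nat.cast_ne_zero.mpr hp.ne'
  field_simp
  ring
end
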